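/- Let S be a set, a ≠ b two elements of S with indicator functions A, B : S → ℚ (A(a) = 1, A(s) = 0 for s ≠ a; similarly B), and let w = (s₁^{ε₁}, …, s_n^{ε_n}) be a word with Σᵢ εᵢ·A(sᵢ) = 0, i.e. with equally many occurrences of the letter a and of the letter a⁻¹. Let P⁺ = {i : sᵢ = a, εᵢ = +1}, P⁻ = {i : sᵢ = a, εᵢ = −1}, and let M : P⁺ → P⁻ be ANY bijection (a pairing-off of a's with a⁻¹'s). Then the letter-braiding value ⌊A⌉B(w) equals the signed count of b's between the chosen a–a⁻¹ pairs: ⌊A⌉B(w) = Σ_{p ∈ P⁺} sgn(p) · ( Σ over positions j strictly between p and M(p) with sⱼ = b of εⱼ ), where sgn(p) = +1 if p < M(p) and sgn(p) = −1 if M(p) < p. In particular the right-hand side is independent of the choice of pairing M. -/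

import Mathlib

namespace Braiding

variable {S : Type*}

/-- A word over `S`: a list of letters, each a generator together with an exponent,
`true` standing for `+1` and `false` for `-1`. Positions are indexed from `0`. -/
abbrev Word (S : Type*) := List (S × Bool)

/-- The rational sign of an exponent: `+1` for `true`, `-1` for `false`. -/
def sgn (b : Bool) : ℚ := if b then 1 else -1

/-- The exponent of the letter at position `j` (junk value `true` out of range). -/
def epsAt (w : Word S) (j : ℕ) : Bool := (w[j]?.map Prod.snd).getD true

/-- The induced d-function `w*h` of a homomorphism datum `h : S → ℚ`:
`(w*h)(i) = εᵢ · h(sᵢ)` (and `0` out of range). -/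
def indD (h : S → ℚ) (w : Word S) (i : ℕ) : ℚ :=
  match w[i]? with
  | some (s, b) => sgn b * h s
  | none => 0

/-- The relation `i ≤_w j`: `i < j` if `ε_j = +1`, and `i ≤ j` if `ε_j = -1`. -/
def leW (w : Word S) (i j : ℕ) : Prop :=
  if epsAt w j = true then i < j else i ≤ j

instance (w : Word S) (i j : ℕ) : Decidable (leW w i j) := by
  unfold leW; infer_instance

/-- The cobounding `⌊f⌉_w(j) = Σ_{i ≤_w j} f(i)` of a d-function. -/
def cobound (w : Word S) (f : ℕ → ℚ) (j : ℕ) : ℚ :=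
  ∑ i ∈ Finset.range w.length, if leW w i j then f i else 0

/-- The braiding product `(⌊f⌉_w g)(j) = ⌊f⌉_w(j) · g(j)`. -/
def braidMul (w : Word S) (f g : ℕ → ℚ) (j : ℕ) : ℚ := cobound w f j * g j

/-- The discrete integral `∫ f = Σ_{i=1}^{n} f(i)` of a d-function on a word of length `n`. -/
def integ (w : Word S) (f : ℕ → ℚ) : ℚ := ∑ i ∈ Finset.range w.length, f i

/-- Homogeneous braiding symbols over `S`: every `h : S → ℚ` is one (of weight 1),
and braiding products `⌊α⌉β` of homogeneous braiding symbols are ones. -/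
inductive HSymbol (S : Type*) where
  | leaf : (S → ℚ) → HSymbol S
  | node : HSymbol S → HSymbol S → HSymbol S

namespace HSymbol

/-- The weight (number of decorating functions) of a homogeneous braiding symbol. -/
def weight : HSymbol S → ℕ
  | leaf _ => 1
  | node α β => weight α + weight β

/-- The associated d-function `w*σ` of a homogeneous braiding symbol on a word `w`. -/
def dfun (w : Word S) : HSymbol S → ℕ → ℚ
  | leaf h => indD h w
  | node α β => braidMul w (dfun w α) (dfun w β)

/-- The letter-braiding value `σ(w) = ∫ w*σ`. -/
def value (σ : HSymbol S) (w : Word S) : ℚ := integ w (σ.dfun w)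

end HSymbol

/-- The element of the free group `F_S` represented by a word:
the product `s₁^{ε₁} ⋯ s_n^{ε_n}`. -/
def wordProd (w : Word S) : FreeGroup S :=
  (w.map (fun p => if p.2 then FreeGroup.of p.1 else (FreeGroup.of p.1)⁻¹)).prod

end Braiding


namespace Braiding

lemma indD_fin {S : Type*} (h : S → ℚ) (w : Word S) (i : Fin w.length) :
    indD h w (i : ℕ) = sgn (w.get i).2 * h (w.get i).1 := by
  unfold indD
  rw [List.getElem?_eq_getElem i.isLt]
  rfl

lemma leW_iff {S : Type*} (w : Word S) (i : ℕ) (j : Fin w.length) (hij : i ≠ (j : ℕ)) :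
    leW w i (j : ℕ) ↔ i < (j : ℕ) := by
  unfold leW epsAt
  rw [List.getElem?_eq_getElem j.isLt]
  simp only [Option.map_some, Option.getD_some]
  split_ifs <;> omega

end Braiding

open Braiding in
/-- Let `A`, `B` be the indicator functions of distinct generators
`a ≠ b`, and let `w` be a word in which the signed count of occurrences of `a` vanishes.
Then for ANY bijection `M` pairing off the positions of `a` with the positions of `a⁻¹`,
the letter-braiding value `⌊A⌉B(w)` equals the signed count of `b`'s occurring strictly
between the chosen `a`–`a⁻¹` pairs, with the sign of a pair `p` being `+1` if `p < M(p)`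
and `-1` otherwise.  In particular the right-hand side is independent of `M`. -/
theorem weight_two_letterLinking_counts_b_between_a_pairs {S : Type*} [DecidableEq S]
    (a b : S) (hab : a ≠ b) (w : Word S)
    (hw : integ w (indD (fun s => if s = a then (1 : ℚ) else 0) w) = 0)
    (M : {i : Fin w.length // (w.get i).1 = a ∧ (w.get i).2 = true} →
         {i : Fin w.length // (w.get i).1 = a ∧ (w.get i).2 = false})
    (hM : Function.Bijective M) :
    (HSymbol.node
        (HSymbol.leaf (fun s => if s = a then (1 : ℚ) else 0))
        (HSymbol.leaf (fun s => if s = b then (1 : ℚ) else 0))).value w =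
      ∑ p : {i : Fin w.length // (w.get i).1 = a ∧ (w.get i).2 = true},
        (if ((p : Fin w.length) : ℕ) < (((M p) : Fin w.length) : ℕ)
            then (1 : ℚ) else -1) *
          ∑ j : Fin w.length,
            if min ((p : Fin w.length) : ℕ) (((M p) : Fin w.length) : ℕ) < (j : ℕ) ∧
                (j : ℕ) < max ((p : Fin w.length) : ℕ) (((M p) : Fin w.length) : ℕ) ∧
                (w.get j).1 = b then
              sgn (w.get j).2
            else 0 := by
  classical
  set A : S → ℚ := fun s => if s = a then (1 : ℚ) else 0 with hA
  set B : S → ℚ := fun s => if s = b then (1 : ℚ) else 0 with hB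
  set G : Fin w.length → ℚ := fun i =>
    ∑ j : Fin w.length, (if leW w i j then indD A w i else 0) * indD B w j with hG
  have lhs_eq : (HSymbol.node (HSymbol.leaf A) (HSymbol.leaf B)).value w
      = ∑ i : Fin w.length, G i := by
    have hcb : ∀ j : Fin w.length, cobound w (indD A w) j * indD B w j
        = ∑ i : Fin w.length, (if leW w i j then indD A w i else 0) * indD B w j := by
      intro j
      rw [cobound, ← Fin.sum_univ_eq_sum_range, Finset.sum_mul]
    simp only [HSymbol.value, HSymbol.dfun, integ, braidMul]
    rw [← Fin.sum_univ_eq_sum_range (fun j => cobound w (indD A w) j * indD B w j)]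
    rw [Finset.sum_congr rfl (fun j _ => hcb j), Finset.sum_comm]
  have hGzero : ∀ i : Fin w.length, (w.get i).1 ≠ a → G i = 0 := by
    intro i hia
    simp only [hG]
    refine Finset.sum_eq_zero fun j _ => ?_
    rw [indD_fin]
    simp only [List.get_eq_getElem] at hia
    simp [hA, hia]
  have hsplit : ∑ i : Fin w.length, G i
      = (∑ p : {i : Fin w.length // (w.get i).1 = a ∧ (w.get i).2 = true}, G ↑p)
      + (∑ q : {i : Fin w.length // (w.get i).1 = a ∧ (w.get i).2 = false}, G ↑q) := by
    rw [← Finset.sum_subtype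
        (Finset.univ.filter fun i : Fin w.length => (w.get i).1 = a ∧ (w.get i).2 = true)
        (by simp) G,
      ← Finset.sum_subtype
        (Finset.univ.filter fun i : Fin w.length => (w.get i).1 = a ∧ (w.get i).2 = false)
        (by simp) G,
      Finset.sum_filter, Finset.sum_filter, ← Finset.sum_add_distrib]
    refine Finset.sum_congr rfl fun i _ => ?_
    by_cases h1 : (w.get i).1 = a
    · have h1' := h1
      simp only [List.get_eq_getElem] at h1'
      cases h2 : w[(i : ℕ)].2 <;> simp [h1', h2]
    · have h1' := h1
      simp only [List.get_eq_getElem] at h1'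
      simp [h1', hGzero i h1]
  have hq_eq : (∑ q : {i : Fin w.length // (w.get i).1 = a ∧ (w.get i).2 = false}, G ↑q)
      = ∑ p : {i : Fin w.length // (w.get i).1 = a ∧ (w.get i).2 = true}, G ↑(M p) :=
    (hM.sum_comp fun q => G ↑q).symm
  rw [lhs_eq, hsplit, hq_eq, ← Finset.sum_add_distrib]
  refine Finset.sum_congr rfl fun p _ => ?_
  obtain ⟨hp1, hp2⟩ := p.2
  obtain ⟨hm1, hm2⟩ := (M p).2
  have hpm : (((p : Fin w.length)) : ℕ) ≠ (((M p : Fin w.length)) : ℕ) := by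
    intro h
    have : (p : Fin w.length) = ((M p : Fin w.length)) := Fin.ext h
    rw [this, hm2] at hp2
    simp at hp2
  simp only [hG, Finset.mul_sum, ← Finset.sum_add_distrib]
  refine Finset.sum_congr rfl fun j _ => ?_
  rw [indD_fin, indD_fin, indD_fin]
  simp only [List.get_eq_getElem] at hp1 hp2 hm1 hm2 ⊢
  have hAa : A a = 1 := by simp [hA]
  have hBb : B b = 1 := by simp [hB]
  have s1 : sgn true = 1 := rfl
  have s2 : sgn false = -1 := rfl
  by_cases hjb : w[(j : ℕ)].1 = b
  · have hpj : (((p : Fin w.length)) : ℕ) ≠ (j : ℕ) := by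
      intro h
      have h2 : (p : Fin w.length) = j := Fin.ext h
      rw [h2, hjb] at hp1
      exact hab hp1.symm
    have hmj : (((M p : Fin w.length)) : ℕ) ≠ (j : ℕ) := by
      intro h
      have h2 : ((M p : Fin w.length)) = j := Fin.ext h
      rw [h2, hjb] at hm1
      exact hab hm1.symm
    simp only [hp1, hp2, hm1, hm2, hjb, hAa, hBb, s1, s2, eq_self_iff_true, and_true,
      leW_iff w _ j hpj, leW_iff w _ j hmj, mul_one, one_mul]
    rcases lt_or_gt_of_ne hpm with h | h
    · rw [min_eq_left h.le, max_eq_right h.le]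
      split_ifs <;> first | ring1 | (exfalso; omega)
    · rw [min_eq_right h.le, max_eq_left h.le]
      split_ifs <;> first | ring1 | (exfalso; omega)
  · simp [hB, hjb]
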